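/- Let X be a real inner product space, z ∈ S a unit vector, δ ∈ (0,1/4], and let (yₙ)_{n∈I} be a family of vectors contained in the cone Ŝ_z = {t·s : t > 0, ‖s − z‖ < δ, ‖s‖ = 1}, indexed by an infinite set I, such that yₙ → 0 along I and ∑_{n∈I} ‖yₙ‖ = ∞. Then for any real numbers 0 < a < b with b − a greater than sup‖yₙ‖ over any cofinite tail, and any finite set F ⊆ I, there exists a finite set E ⊆ I∖F with a < ‖∑_{n∈E} yₙ‖ ≤ b. -/

import Mathlib

open Filter Topology

/-- The open cone over the spherical cap `{s : ‖s‖ = 1, ‖s - z‖ < δ}`. -/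
def SphericalCone {X : Type*} [NormedAddCommGroup X] [InnerProductSpace ℝ X]
    (z : X) (δ : ℝ) : Set X :=
  {v : X | ∃ t : ℝ, 0 < t ∧ ∃ s : X, ‖s‖ = 1 ∧ ‖s - z‖ < δ ∧ v = t • s}

theorem stmt7
    {X : Type*} [NormedAddCommGroup X] [InnerProductSpace ℝ X]
    (z : X) (hz : ‖z‖ = 1) (δ : ℝ) (hδ0 : 0 < δ) (hδ : δ ≤ 1/4)
    (I : Set ℕ) (hI : I.Infinite)
    (y : ℕ → X) (hy : ∀ n ∈ I, y n ∈ SphericalCone z δ)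
    (hy0 : Tendsto (fun n : I => y (n : ℕ)) cofinite (𝓝 0))
    (hdiv : ¬ Summable (fun n : I => ‖y (n : ℕ)‖))
    (a b : ℝ) (ha : 0 < a) (hab : a < b)
    (htail : {n ∈ I | b - a ≤ ‖y n‖}.Finite)
    (F : Finset ℕ) :
    ∃ E : Finset ℕ, (E : Set ℕ) ⊆ I \ (F : Set ℕ) ∧
      a < ‖∑ n ∈ E, y n‖ ∧ ‖∑ n ∈ E, y n‖ ≤ b := by
  classical
  set c : ℝ := 1 - δ^2/2 with hc
  have hδ2 : δ^2 ≤ 1/16 := by nlinarith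
  have hc0 : (0:ℝ) < c := by rw [hc]; nlinarith
  -- inner product lower bound
  have key : ∀ n ∈ I, c * ‖y n‖ ≤ inner ℝ (y n) z := by
    intro n hn
    obtain ⟨t, ht, s, hs1, hsz, heq⟩ := hy n hn
    have hsz2 : ‖s - z‖^2 < δ^2 := by
      have h0 : (0:ℝ) ≤ ‖s - z‖ := norm_nonneg _
      nlinarith
    have hinner : (c : ℝ) ≤ inner ℝ s z := by
      have h := norm_sub_sq_real s z
      rw [hs1, hz] at h
      rw [hc]
      nlinarith [h, hsz2]
    have hnorm : ‖y n‖ = t := by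
      rw [heq, norm_smul, hs1, Real.norm_eq_abs, abs_of_pos ht, mul_one]
    rw [hnorm, heq, real_inner_smul_left]
    nlinarith [hinner, ht.le]
  -- sum lower bound
  have sumLB : ∀ E : Finset ℕ, (E : Set ℕ) ⊆ I → c * ∑ n ∈ E, ‖y n‖ ≤ ‖∑ n ∈ E, y n‖ := by
    intro E hE
    have h1 : c * ∑ n ∈ E, ‖y n‖ ≤ inner ℝ (∑ n ∈ E, y n) z := by
      rw [sum_inner, Finset.mul_sum]
      exact Finset.sum_le_sum fun n hn => key n (hE hn)
    calc c * ∑ n ∈ E, ‖y n‖ ≤ inner ℝ (∑ n ∈ E, y n) z := h1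
      _ ≤ ‖∑ n ∈ E, y n‖ * ‖z‖ := real_inner_le_norm _ _
      _ = ‖∑ n ∈ E, y n‖ := by rw [hz, mul_one]
  -- the good index set
  set J : Set ℕ := I \ (↑F ∪ {n ∈ I | b - a ≤ ‖y n‖}) with hJ
  have hJI : J ⊆ I := Set.diff_subset
  have hJinf : J.Infinite := hI.diff (F.finite_toSet.union htail)
  have hJinf' : Infinite J := hJinf.to_subtype
  obtain ⟨e⟩ : Nonempty (ℕ ≃ J) := nonempty_equiv_of_countable
  -- the restricted norms are not summable
  have hnsJ : ¬ Summable (fun n : J => ‖y (n : ℕ)‖) := by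
    intro hS
    apply hdiv
    have hS' : Summable (J.indicator fun n => ‖y n‖) :=
      (summable_subtype_iff_indicator (f := fun n => ‖y n‖) (s := J)).mp hS
    have hfin : (I \ J).Finite := by
      refine ((F.finite_toSet.union htail)).subset ?_
      intro n hn
      rcases hn with ⟨hnI, hnJ⟩
      by_contra h
      exact hnJ ⟨hnI, h⟩
    have hsum2 : Summable ((I \ J).indicator fun n => ‖y n‖) :=
      (summable_subtype_iff_indicator (f := fun n => ‖y n‖) (s := I \ J)).mp
        (hfin.summable _)
    have hsplit : ∀ n, I.indicator (fun n => ‖y n‖) n =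
        J.indicator (fun n => ‖y n‖) n + (I \ J).indicator (fun n => ‖y n‖) n := by
      intro n
      simp only [Set.indicator_apply, Set.mem_diff]
      by_cases hnJ : n ∈ J
      · simp [hnJ, hJI hnJ]
      · by_cases hnI : n ∈ I <;> simp [hnJ, hnI]
    refine (summable_subtype_iff_indicator (f := fun n => ‖y n‖) (s := I)).mpr ?_
    exact (hS'.add hsum2).congr fun n => (hsplit n).symm
  have hnsf : ¬ Summable (fun i : ℕ => ‖y ((e i : ℕ))‖) := by
    intro hS
    exact hnsJ ((Equiv.summable_iff e (f := fun n : J => ‖y (n : ℕ)‖)).mp hS)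
  have hnn : ∀ i : ℕ, 0 ≤ ‖y ((e i : ℕ))‖ := fun i => norm_nonneg _
  have htop : Tendsto (fun k => ∑ i ∈ Finset.range k, ‖y ((e i : ℕ))‖) atTop atTop :=
    (not_summable_iff_tendsto_nat_atTop_of_nonneg hnn).mp hnsf
  -- partial sums
  have hinj : ∀ k : ℕ, ∀ i ∈ Finset.range k, ∀ j ∈ Finset.range k,
      ((e i : ℕ)) = ((e j : ℕ)) → i = j := fun k i _ j _ h => e.injective (Subtype.ext h)
  have hEsub : ∀ k : ℕ, (((Finset.range k).image (fun i => ((e i : ℕ)))) : Set ℕ) ⊆ J := by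
    intro k n hn
    simp only [Finset.coe_image, Set.mem_image, Finset.mem_coe] at hn
    obtain ⟨i, _, rfl⟩ := hn
    exact (e i).2
  have hex : ∃ k, a < ‖∑ i ∈ Finset.range k, y ((e i : ℕ))‖ := by
    obtain ⟨k, hk⟩ := (htop.eventually_gt_atTop (a / c)).exists
    refine ⟨k, ?_⟩
    have hle : c * ∑ i ∈ Finset.range k, ‖y ((e i : ℕ))‖
        ≤ ‖∑ i ∈ Finset.range k, y ((e i : ℕ))‖ := by
      rw [← Finset.sum_image (hinj k) (f := y), ← Finset.sum_image (hinj k) (f := fun n => ‖y n‖)]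
      exact sumLB _ ((hEsub k).trans hJI)
    have h2 : a < c * ∑ i ∈ Finset.range k, ‖y ((e i : ℕ))‖ := by
      rw [div_lt_iff₀ hc0] at hk; linarith
    linarith
  -- least such k
  set k := Nat.find hex with hkdef
  have hk : a < ‖∑ i ∈ Finset.range k, y ((e i : ℕ))‖ := Nat.find_spec hex
  have hkpos : k ≠ 0 := by
    intro h
    rw [h] at hk
    simp at hk
    linarith
  obtain ⟨m, hm⟩ := Nat.exists_eq_succ_of_ne_zero hkpos
  have hprev : ¬ a < ‖∑ i ∈ Finset.range m, y ((e i : ℕ))‖ :=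
    Nat.find_min hex (by omega)
  push_neg at hprev
  have hym : ‖y ((e m : ℕ))‖ < b - a := by
    have hmem : ((e m : ℕ)) ∈ I \ (↑F ∪ {n ∈ I | b - a ≤ ‖y n‖}) := (e m).2
    have h1 : ((e m : ℕ)) ∉ {n ∈ I | b - a ≤ ‖y n‖} := fun h => hmem.2 (Or.inr h)
    simp only [Set.mem_setOf_eq, not_and, not_le] at h1
    exact h1 (hJI (e m).2)
  have hub : ‖∑ i ∈ Finset.range k, y ((e i : ℕ))‖ ≤ b := by
    rw [hm, Finset.sum_range_succ]
    calc ‖(∑ i ∈ Finset.range m, y ((e i : ℕ))) + y ((e m : ℕ))‖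
        ≤ ‖∑ i ∈ Finset.range m, y ((e i : ℕ))‖ + ‖y ((e m : ℕ))‖ := norm_add_le _ _
      _ ≤ a + (b - a) := by linarith
      _ = b := by ring
  refine ⟨(Finset.range k).image (fun i => ((e i : ℕ))), ?_, ?_, ?_⟩
  · intro n hn
    have hnJ : n ∈ I \ (↑F ∪ {n ∈ I | b - a ≤ ‖y n‖}) := hEsub k hn
    exact ⟨hnJ.1, fun h => hnJ.2 (Or.inl h)⟩
  · rw [Finset.sum_image (hinj k)]
    exact hk
  · rw [Finset.sum_image (hinj k)]
    exact hub
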